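/- If s_2(t) > s_2(m) with 0 < t < 2^k and m ≤ 2^n, then there exists a subset S ⊆ F_2^n of size m such that no k-dimensional affine subspace of F_2^n contains exactly t points of S; i.e., [n,m] does not force [k,t]. -/

import Mathlib

def IsFlat (n k : ℕ) (H : Set (Fin n → ZMod 2)) : Prop :=
  ∃ (x : Fin n → ZMod 2) (W : Submodule (ZMod 2) (Fin n → ZMod 2)),
    Module.finrank (ZMod 2) W = k ∧ H = (fun w => x + w) '' (W : Set (Fin n → ZMod 2))

/-- Binary digit sum. -/
def s2 (m : ℕ) : ℕ := (Nat.digits 2 m).sum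



lemma s2_zero : s2 0 = 0 := by simp [s2]

lemma s2_def {n : ℕ} (h : 0 < n) : s2 n = n % 2 + s2 (n / 2) := by
  unfold s2
  rw [Nat.digits_def' (by norm_num : (1:ℕ) < 2) h, List.sum_cons]

lemma s2_one : s2 1 = 1 := by simp [s2]

lemma s2_pow (a : ℕ) : s2 (2 ^ a) = 1 := by
  induction a with
  | zero => exact s2_one
  | succ a ih =>
    rw [s2_def (by positivity)]
    have h1 : 2 ^ (a+1) % 2 = 0 := by simp [pow_succ]
    have h2 : 2 ^ (a+1) / 2 = 2 ^ a := by rw [pow_succ]; exact Nat.mul_div_cancel _ (by norm_num)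
    rw [h1, h2, ih]

lemma s2_succ_le (n : ℕ) : s2 (n + 1) ≤ s2 n + 1 := by
  induction n using Nat.strong_induction_on with
  | _ n ih =>
    rcases Nat.even_or_odd n with ⟨j, hj⟩ | ⟨j, hj⟩
    · rcases Nat.eq_zero_or_pos n with h0 | h0
      · subst h0; simp [s2_zero, s2_one]
      have e1 : s2 (n+1) = 1 + s2 (n / 2) := by
        rw [s2_def (by omega), (by omega : (n+1) % 2 = 1), (by omega : (n+1) / 2 = n / 2)]
      have e2 : s2 n = s2 (n / 2) := by
        rw [s2_def h0, (by omega : n % 2 = 0), zero_add]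
      omega
    · have e1 : s2 (n+1) = s2 (j+1) := by
        rw [s2_def (by omega), (by omega : (n+1) % 2 = 0), (by omega : (n+1) / 2 = j + 1), zero_add]
      have e2 : s2 n = 1 + s2 j := by
        rw [s2_def (by omega), (by omega : n % 2 = 1), (by omega : n / 2 = j)]
      have := ih j (by omega)
      omega

lemma s2_add_le (a b : ℕ) : s2 (a + b) ≤ s2 a + s2 b := by
  induction a using Nat.strong_induction_on generalizing b with
  | _ a ih =>
    rcases Nat.eq_zero_or_pos a with h0 | h0
    · subst h0; simp [s2_zero]
    rcases Nat.eq_zero_or_pos b with hb0 | hb0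
    · subst hb0; simp [s2_zero]
    have ea : s2 a = a % 2 + s2 (a / 2) := s2_def h0
    have eb : s2 b = b % 2 + s2 (b / 2) := s2_def hb0
    have eab : s2 (a + b) = (a + b) % 2 + s2 ((a + b) / 2) := s2_def (by omega)
    have key : s2 ((a+b)/2) ≤ s2 (a/2) + s2 (b/2) + (a % 2 + b % 2) / 2 := by
      rcases Nat.even_or_odd (a % 2 + b % 2) with ⟨j, hj⟩ | ⟨j, hj⟩
      · have : a % 2 = b % 2 := by omega
        rcases (by omega : a % 2 = 0 ∧ b % 2 = 0 ∨ a % 2 = 1 ∧ b % 2 = 1) with ⟨h1, h2⟩ | ⟨h1, h2⟩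
        · have : (a+b)/2 = a/2 + b/2 := by omega
          rw [this, h1, h2]
          simpa using ih (a/2) (by omega) (b/2)
        · have : (a+b)/2 = a/2 + b/2 + 1 := by omega
          rw [this, h1, h2]
          calc s2 (a/2 + b/2 + 1) ≤ s2 (a/2 + b/2) + 1 := s2_succ_le _
            _ ≤ s2 (a/2) + s2 (b/2) + 1 := by have := ih (a/2) (by omega) (b/2); omega
            _ = _ := by omega
      · have h1 : (a % 2 + b % 2) = 1 := by omega
        have : (a+b)/2 = a/2 + b/2 := by omega
        rw [this, h1]
        simpa using ih (a/2) (by omega) (b/2)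
    omega

lemma s2_pow_add {a r : ℕ} (h : r < 2 ^ a) : s2 (2 ^ a + r) = 1 + s2 r := by
  induction a generalizing r with
  | zero =>
    have : r = 0 := by omega
    subst this; simp [s2_one, s2_zero]
  | succ a ih =>
    have hpos : 0 < 2 ^ (a+1) + r := by positivity
    rw [s2_def hpos]
    have h1 : (2^(a+1) + r) % 2 = r % 2 := by
      have : 2^(a+1) % 2 = 0 := by simp [pow_succ]
      omega
    have h2 : (2^(a+1) + r) / 2 = 2^a + r/2 := by
      have : 2^(a+1) = 2 * 2^a := by ring
      omega
    have h3 : r / 2 < 2 ^ a := by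
      have : 2^(a+1) = 2 * 2^a := by ring
      omega
    rw [h1, h2, ih h3]
    rcases Nat.eq_zero_or_pos r with h0 | h0
    · subst h0; simp [s2_zero]
    · rw [s2_def h0]; omega

section
variable {n : ℕ}

/-- numeric value of a binary vector -/
def fval (x : Fin n → ZMod 2) : ℕ := ∑ i, (x i).val * 2 ^ (i : ℕ)

def binEquiv : (Fin n → ZMod 2) ≃ Fin (2 ^ n) :=
  (Equiv.piCongrRight fun _ => (Equiv.cast (rfl : ZMod 2 = Fin 2))).trans finFunctionFinEquiv

lemma fval_eq_binEquiv (x : Fin n → ZMod 2) : fval x = (binEquiv x : ℕ) := by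
  show _ = ((finFunctionFinEquiv fun i => (Equiv.cast (rfl : ZMod 2 = Fin 2)) (x i) : Fin (2^n)) : ℕ)
  have hf := finFunctionFinEquiv_apply (fun i => (Equiv.cast (rfl : ZMod 2 = Fin 2)) (x i))
  refine Eq.trans ?_ hf.symm
  rfl

lemma fval_injective : Function.Injective (fval (n := n)) := by
  intro x y h
  rw [fval_eq_binEquiv, fval_eq_binEquiv] at h
  exact binEquiv.injective (Fin.val_injective h)

lemma fval_lt (x : Fin n → ZMod 2) : fval x < 2 ^ n := by
  rw [fval_eq_binEquiv]; exact (binEquiv x).isLt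

lemma ncard_fval_lt {m : ℕ} (hm : m ≤ 2 ^ n) : {x : Fin n → ZMod 2 | fval x < m}.ncard = m := by
  have himg : binEquiv '' {x : Fin n → ZMod 2 | fval x < m} = {v : Fin (2^n) | (v : ℕ) < m} := by
    ext v
    simp only [Set.mem_image, Set.mem_setOf_eq]
    constructor
    · rintro ⟨x, hx, rfl⟩; rwa [← fval_eq_binEquiv]
    · intro hv; exact ⟨binEquiv.symm v, by rw [fval_eq_binEquiv, Equiv.apply_symm_apply]; exact hv, Equiv.apply_symm_apply _ _⟩
  have h2 : {v : Fin (2^n) | (v : ℕ) < m} = Set.range (Fin.castLE hm) := by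
    ext v
    simp only [Set.mem_setOf_eq, Set.mem_range]
    constructor
    · intro hv; exact ⟨⟨v, hv⟩, by ext; rfl⟩
    · rintro ⟨w, rfl⟩; exact w.isLt
  calc {x : Fin n → ZMod 2 | fval x < m}.ncard
      = (binEquiv '' {x : Fin n → ZMod 2 | fval x < m}).ncard :=
        (Set.ncard_image_of_injective _ binEquiv.injective).symm
    _ = (Set.range (Fin.castLE hm)).ncard := by rw [himg, h2]
    _ = m := by
        rw [← Set.image_univ, Set.ncard_image_of_injective _ (Fin.castLE_injective hm),
          Set.ncard_univ, Nat.card_eq_fintype_card, Fintype.card_fin]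

lemma le_fval_of_ne {x : Fin n → ZMod 2} {i : Fin n} (h : x i ≠ 0) : 2 ^ (i : ℕ) ≤ fval x := by
  have h1 : (x i).val = 1 := by
    have : ∀ z : ZMod 2, z ≠ 0 → ZMod.val z = 1 := by decide
    exact this _ h
  calc 2 ^ (i:ℕ) = (x i).val * 2 ^ (i:ℕ) := by rw [h1, one_mul]
    _ ≤ fval x := Finset.single_le_sum (f := fun j : Fin n => (x j).val * 2 ^ (j:ℕ))
        (fun j _ => Nat.zero_le _) (Finset.mem_univ i)

lemma sum_range_pow_lt (a : ℕ) : ∑ j ∈ Finset.range a, 2 ^ j < 2 ^ a := by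
  induction a with
  | zero => simp
  | succ a ih => rw [Finset.sum_range_succ, pow_succ]; omega

lemma fval_lt_pow_iff (a : ℕ) (x : Fin n → ZMod 2) :
    fval x < 2 ^ a ↔ ∀ i : Fin n, a ≤ (i : ℕ) → x i = 0 := by
  constructor
  · intro h i hi
    by_contra hne
    have := le_fval_of_ne hne
    have : 2 ^ a ≤ 2 ^ (i:ℕ) := Nat.pow_le_pow_right (by norm_num) hi
    omega
  · intro h
    have e1 : fval x = ∑ i ∈ Finset.univ.filter (fun i : Fin n => (i:ℕ) < a), (x i).val * 2 ^ (i:ℕ) := by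
      rw [fval]
      refine (Finset.sum_filter_of_ne ?_).symm
      intro i _ hne
      by_contra hlt
      push_neg at hlt
      rw [h i hlt] at hne
      simp at hne
    have e2 : ∑ i ∈ Finset.univ.filter (fun i : Fin n => (i:ℕ) < a), (x i).val * 2 ^ (i:ℕ)
        ≤ ∑ i ∈ Finset.univ.filter (fun i : Fin n => (i:ℕ) < a), 2 ^ (i:ℕ) := by
      refine Finset.sum_le_sum fun i _ => ?_
      have : (x i).val ≤ 1 := by
        have : ∀ z : ZMod 2, ZMod.val z ≤ 1 := by decide
        exact this _
      calc (x i).val * 2 ^ (i:ℕ) ≤ 1 * 2 ^ (i:ℕ) := Nat.mul_le_mul_right _ this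
        _ = 2 ^ (i:ℕ) := one_mul _
    have e3 : ∑ i ∈ Finset.univ.filter (fun i : Fin n => (i:ℕ) < a), 2 ^ (i:ℕ)
        = ∑ j ∈ (Finset.univ.filter (fun i : Fin n => (i:ℕ) < a)).image Fin.val, 2 ^ j := by
      rw [Finset.sum_image (fun i _ j _ h => Fin.val_injective h)]
    have e4 : (Finset.univ.filter (fun i : Fin n => (i:ℕ) < a)).image Fin.val ⊆ Finset.range a := by
      intro j hj
      simp only [Finset.mem_image, Finset.mem_filter] at hj
      obtain ⟨i, ⟨_, hi⟩, rfl⟩ := hj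
      exact Finset.mem_range.mpr hi
    have e5 : ∑ j ∈ (Finset.univ.filter (fun i : Fin n => (i:ℕ) < a)).image Fin.val, 2 ^ j
        ≤ ∑ j ∈ Finset.range a, 2 ^ j := Finset.sum_le_sum_of_subset e4
    have := sum_range_pow_lt a
    omega

lemma pi_add_self (x : Fin n → ZMod 2) : x + x = 0 := by
  funext i
  have : ∀ z : ZMod 2, z + z = 0 := by decide
  exact this _

lemma fval_flip (a : Fin n) (x : Fin n → ZMod 2) (h : x a = 0) :
    fval (x + Pi.single a 1) = fval x + 2 ^ (a : ℕ) := by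
  unfold fval
  rw [← Finset.add_sum_erase _ _ (Finset.mem_univ a), ← Finset.add_sum_erase _ _ (Finset.mem_univ a)]
  have h1 : (((x + Pi.single a 1 : Fin n → ZMod 2)) a).val * 2 ^ (a:ℕ) = 2 ^ (a:ℕ) := by
    simp [h, ZMod.val_one]
  have h2 : (x a).val * 2 ^ (a:ℕ) = 0 := by simp [h]
  have h3 : ∑ i ∈ Finset.univ.erase a, (((x + Pi.single a 1 : Fin n → ZMod 2)) i).val * 2 ^ (i:ℕ)
      = ∑ i ∈ Finset.univ.erase a, (x i).val * 2 ^ (i:ℕ) := by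
    refine Finset.sum_congr rfl fun i hi => ?_
    have hne : i ≠ a := Finset.ne_of_mem_erase hi
    simp [Pi.single_apply, hne]
  rw [h1, h2, h3]
  omega

end

lemma pi_add_self' {n : ℕ} (x : Fin n → ZMod 2) : x + x = 0 := by
  funext i
  have : ∀ z : ZMod 2, z + z = 0 := by decide
  exact this _

section
variable {n : ℕ}

abbrev V2 (n : ℕ) := Fin n → ZMod 2

lemma mem_coset {x z : V2 n} {W : Submodule (ZMod 2) (V2 n)} :
    z ∈ (fun w => x + w) '' (W : Set (V2 n)) ↔ x + z ∈ W := by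
  constructor
  · rintro ⟨w, hw, rfl⟩
    rwa [← add_assoc, pi_add_self', zero_add]
  · intro h
    exact ⟨x + z, h, by show x + (x + z) = z; rw [← add_assoc, pi_add_self', zero_add]⟩

lemma add_cancel_mem {x y z : V2 n} {W : Submodule (ZMod 2) (V2 n)}
    (hxy : x + y ∈ W) : x + z ∈ W ↔ y + z ∈ W := by
  constructor
  · intro h
    have := W.add_mem hxy h
    have e : (x + y) + (x + z) = y + z := by
      rw [show (x + y) + (x + z) = (x + x) + (y + z) by ring, pi_add_self', zero_add]
    rwa [e] at this
  · intro h
    have := W.add_mem hxy h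
    have e : (x + y) + (y + z) = x + z := by
      rw [show (x + y) + (y + z) = x + ((y + y) + z) by ring, pi_add_self', zero_add]
    rwa [e] at this

lemma s2_ncard_coset_inter (x₁ x₂ : V2 n) (W₁ W₂ : Submodule (ZMod 2) (V2 n)) :
    s2 ((((fun w => x₁ + w) '' (W₁ : Set (V2 n))) ∩ ((fun w => x₂ + w) '' (W₂ : Set (V2 n)))).ncard) ≤ 1 := by
  by_cases hne : (((fun w => x₁ + w) '' (W₁ : Set (V2 n))) ∩ ((fun w => x₂ + w) '' (W₂ : Set (V2 n)))) = ∅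
  · rw [hne]; simp [s2_zero]
  obtain ⟨y, hy₁, hy₂⟩ := Set.nonempty_iff_ne_empty.mpr hne
  rw [mem_coset] at hy₁ hy₂
  have hset : (((fun w => x₁ + w) '' (W₁ : Set (V2 n))) ∩ ((fun w => x₂ + w) '' (W₂ : Set (V2 n))))
      = (fun u => y + u) '' ((W₁ ⊓ W₂ : Submodule (ZMod 2) (V2 n)) : Set (V2 n)) := by
    ext z
    rw [Set.mem_inter_iff, mem_coset, mem_coset, mem_coset]
    rw [add_cancel_mem hy₁, add_cancel_mem hy₂]
    rfl
  rw [hset, Set.ncard_image_of_injective _ (add_right_injective y)]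
  set U := (W₁ ⊓ W₂ : Submodule (ZMod 2) (V2 n))
  haveI : Fintype U := Fintype.ofFinite U
  have hcard : ((U : Set (V2 n)).ncard) = 2 ^ Module.finrank (ZMod 2) U := by
    rw [← Nat.card_coe_set_eq, Nat.card_eq_fintype_card]
    have := Module.card_eq_pow_finrank (K := ZMod 2) (V := U)
    rwa [ZMod.card 2] at this
  rw [hcard, s2_pow]
end

section
variable {n : ℕ}

def W0 (n a : ℕ) : Submodule (ZMod 2) (V2 n) where
  carrier := {y | ∀ i : Fin n, a ≤ (i : ℕ) → y i = 0}
  add_mem' := by intro p q hp hq i hi; simp [Pi.add_apply, hp i hi, hq i hi]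
  zero_mem' := by intro i hi; rfl
  smul_mem' := by intro c p hp i hi; simp [Pi.smul_apply, hp i hi]

lemma cube_eq_coset (a : ℕ) :
    {y : V2 n | fval y < 2 ^ a} = (fun w => (0 : V2 n) + w) '' ((W0 n a : Set (V2 n))) := by
  ext z
  rw [Set.mem_setOf_eq, mem_coset, zero_add, fval_lt_pow_iff]
  rfl

lemma key_lemma (m : ℕ) (x : V2 n) (W : Submodule (ZMod 2) (V2 n)) :
    s2 ((((fun w => x + w) '' (W : Set (V2 n))) ∩ {y : V2 n | fval y < m}).ncard) ≤ s2 m := by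
  induction m using Nat.strong_induction_on generalizing x with
  | _ m ih =>
  rcases Nat.eq_zero_or_pos m with h0 | h0
  · subst h0
    have : {y : V2 n | fval y < 0} = ∅ := by ext y; simp
    rw [this, Set.inter_empty, Set.ncard_empty, s2_zero]
  set a := Nat.log 2 m with ha
  have hle : 2 ^ a ≤ m := Nat.pow_log_le_self 2 (by omega)
  have hlt : m < 2 ^ (a + 1) := Nat.lt_pow_succ_log_self (by norm_num) m
  set r := m - 2 ^ a with hr
  have hra : r < 2 ^ a := by rw [hr]; rw [pow_succ] at hlt; omega
  set H := (fun w => x + w) '' (W : Set (V2 n)) with hH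
  have hsplit : {y : V2 n | fval y < m} = {y : V2 n | fval y < 2 ^ a} ∪ {y : V2 n | 2 ^ a ≤ fval y ∧ fval y < m} := by
    ext y; simp only [Set.mem_setOf_eq, Set.mem_union]; omega
  have hdisj : Disjoint (H ∩ {y : V2 n | fval y < 2 ^ a}) (H ∩ {y : V2 n | 2 ^ a ≤ fval y ∧ fval y < m}) := by
    rw [Set.disjoint_iff]
    rintro y ⟨⟨_, h1⟩, ⟨_, h2, _⟩⟩
    exact absurd h1 (by simp only [Set.mem_setOf_eq] at h1 ⊢; omega)
  have hcount : (H ∩ {y : V2 n | fval y < m}).ncard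
      = (H ∩ {y : V2 n | fval y < 2 ^ a}).ncard + (H ∩ {y : V2 n | 2 ^ a ≤ fval y ∧ fval y < m}).ncard := by
    rw [hsplit, Set.inter_union_distrib_left]
    exact Set.ncard_union_eq hdisj (Set.toFinite _) (Set.toFinite _)
  have b1 : s2 ((H ∩ {y : V2 n | fval y < 2 ^ a}).ncard) ≤ 1 := by
    rw [cube_eq_coset a, hH]
    exact s2_ncard_coset_inter x 0 W (W0 n a)
  have b2 : s2 ((H ∩ {y : V2 n | 2 ^ a ≤ fval y ∧ fval y < m}).ncard) ≤ s2 r := by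
    rcases Nat.eq_zero_or_pos r with hr0 | hr0
    · have : {y : V2 n | 2 ^ a ≤ fval y ∧ fval y < m} = ∅ := by
        ext y; simp only [Set.mem_setOf_eq, Set.mem_empty_iff_false, iff_false, not_and, not_lt]
        intro hy; omega
      rw [this, Set.inter_empty, Set.ncard_empty, s2_zero]
      exact Nat.zero_le _
    by_cases han : n ≤ a
    · have : {y : V2 n | 2 ^ a ≤ fval y ∧ fval y < m} = ∅ := by
        ext y
        simp only [Set.mem_setOf_eq, Set.mem_empty_iff_false, iff_false, not_and, not_lt]
        intro hy
        have := fval_lt y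
        have : (2:ℕ) ^ n ≤ 2 ^ a := Nat.pow_le_pow_right (by norm_num) han
        omega
      rw [this, Set.inter_empty, Set.ncard_empty, s2_zero]
      exact Nat.zero_le _
    push_neg at han
    set aF : Fin n := ⟨a, han⟩ with haF
    set e : V2 n := Pi.single aF 1 with he
    have hee : e + e = 0 := pi_add_self' e
    have himg : H ∩ {y : V2 n | 2 ^ a ≤ fval y ∧ fval y < m}
        = (fun z => z + e) '' (((fun w => (x + e) + w) '' (W : Set (V2 n))) ∩ {z : V2 n | fval z < r}) := by
      ext y
      constructor
      · rintro ⟨hyH, hy1, hy2⟩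
        have hya : y aF ≠ 0 := by
          intro hya0
          have : ¬ fval y < 2 ^ a := by omega
          rw [fval_lt_pow_iff] at this
          push_neg at this
          obtain ⟨i, hi1, hi2⟩ := this
          have hia : (i : ℕ) ≠ a := by
            intro hh
            apply hi2
            have : i = aF := Fin.ext hh
            rw [this, hya0]
          have h2i : 2 ^ (a+1) ≤ 2 ^ (i:ℕ) := Nat.pow_le_pow_right (by norm_num) (by omega)
          have := le_fval_of_ne hi2
          omega
        refine ⟨y + e, ⟨?_, ?_⟩, by show (y + e) + e = y; rw [add_assoc, hee, add_zero]⟩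
        · rw [mem_coset] at hyH ⊢
          have : (x + e) + (y + e) = x + y := by
            rw [show (x + e) + (y + e) = (x + y) + (e + e) by ring, hee, add_zero]
          rwa [this]
        · have hza : (y + e) aF = 0 := by
            have hax : ∀ z : ZMod 2, z ≠ 0 → z = 1 := by decide
            have h1 := hax _ hya
            show y aF + e aF = 0
            rw [h1, he, Pi.single_eq_same]
            decide
          have hfv := fval_flip aF (y + e) hza
          rw [add_assoc, hee, add_zero] at hfv
          rw [show ((aF : Fin n) : ℕ) = a from rfl] at hfv
          simp only [Set.mem_setOf_eq]
          omega
      · rintro ⟨z, ⟨hzH, hzr⟩, rfl⟩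
        simp only [Set.mem_setOf_eq] at hzr
        have hza : z aF = 0 := by
          have : fval z < 2 ^ a := by omega
          rw [fval_lt_pow_iff] at this
          exact this aF (le_refl _)
        have hfv := fval_flip aF z hza
        rw [mem_coset] at hzH
        refine ⟨?_, ?_⟩
        · rw [mem_coset]
          have : x + (z + e) = (x + e) + z := by ring
          rwa [this]
        · rw [show ((aF : Fin n) : ℕ) = a from rfl] at hfv
          simp only [Set.mem_setOf_eq, ← he] at hfv ⊢
          omega
    rw [himg, Set.ncard_image_of_injective _ (fun u v huv => by
      have : u + e + e = v + e + e := by rw [huv]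
      rwa [add_assoc, hee, add_zero, add_assoc, hee, add_zero] at this)]
    exact ih r (by omega) (x + e)
  have hm_eq : m = 2 ^ a + r := by omega
  calc s2 ((H ∩ {y : V2 n | fval y < m}).ncard)
      ≤ s2 ((H ∩ {y : V2 n | fval y < 2 ^ a}).ncard) + s2 ((H ∩ {y : V2 n | 2 ^ a ≤ fval y ∧ fval y < m}).ncard) := by
        rw [hcount]; exact s2_add_le _ _
    _ ≤ 1 + s2 r := by omega
    _ = s2 m := by rw [hm_eq, s2_pow_add hra]

end

theorem stmt_8 (n k t m : ℕ) (hm : m ≤ 2 ^ n) (ht0 : 0 < t) (ht : t < 2 ^ k)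
    (hs : s2 m < s2 t) :
    ∃ S : Set (Fin n → ZMod 2), S.ncard = m ∧
      ¬ ∃ H : Set (Fin n → ZMod 2), IsFlat n k H ∧ (H ∩ S).ncard = t := by
  refine ⟨{y | fval y < m}, ncard_fval_lt hm, ?_⟩
  rintro ⟨H, ⟨x, W, -, rfl⟩, hcard⟩
  have hk := key_lemma m x W
  rw [hcard] at hk
  omega
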